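/- arXiv:0911.2266 — 2 statements merged into one kernel-verified Lean document; each statement's English description precedes it below -/
import Mathlib

section
/- Fix an integer m ≥ 2 and δ > 0. There is a constant C > 0 depending only on m such that if v ≥ C · δ^{-(1 − 1/m)}, then for every ζ ∈ ℂ, |1/2 + δ + ζ|² + |ζ|^m v^m > 1/4. -/
theorem line_avoids_inner_boundary (m : ℕ) (hm : 2 ≤ m) :
    ∃ C : ℝ, 0 < C ∧ ∀ δ : ℝ, 0 < δ → ∀ v : ℝ,
      v ≥ C * δ ^ (-(1 - 1 / (m : ℝ))) →
      ∀ ζ : ℂ, ‖(1 / 2 + (δ : ℂ) + ζ)‖ ^ 2 + ‖ζ‖ ^ m * v ^ m > 1 / 4 := by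
  refine ⟨2, by norm_num, fun δ hδ v hv ζ => ?_⟩
  set a : ℝ := δ ^ (-(1 - 1 / (m : ℝ))) with ha
  have ha0 : 0 < a := Real.rpow_pos_of_pos hδ _
  have hv0 : 0 < v := lt_of_lt_of_le (by positivity) hv
  set r : ℝ := ‖ζ‖ with hrdef
  have hr0 : 0 ≤ r := norm_nonneg ζ
  set A : ℝ := ‖(1 / 2 + (δ : ℂ) + ζ)‖ with hA
  have hA0 : 0 ≤ A := norm_nonneg _
  have habs : ‖((1/2 : ℂ) + (δ : ℂ))‖ = 1/2 + δ := by
    have h : ((1/2 : ℂ) + (δ : ℂ)) = (((1/2 + δ : ℝ)) : ℂ) := by push_cast; ring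
    rw [h, Complex.norm_real, Real.norm_eq_abs, abs_of_pos]; linarith
  have h1 : |(1/2 + δ) - r| ≤ A := by
    have h := abs_norm_sub_norm_le ((1/2 : ℂ) + (δ : ℂ)) (-ζ)
    simp only [norm_neg, sub_neg_eq_add] at h
    rw [habs] at h
    simpa [hA, hrdef, add_assoc] using h
  have h1sq : ((1/2 + δ) - r)^2 ≤ A^2 := by
    have := abs_le.mp h1
    nlinarith [this.1, this.2]
  have hm0 : (m : ℝ) ≠ 0 := by positivity
  have key : δ^(m-1) * a^m = 1 := by
    have e1 : a^m = δ ^ ((-(1 - 1/(m:ℝ))) * m) := by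
      rw [← Real.rpow_natCast a m, ha, ← Real.rpow_mul hδ.le]
    have e2 : δ^(m-1) = δ ^ (((m:ℝ)) - 1) := by
      rw [← Real.rpow_natCast δ (m-1)]
      congr 1
      push_cast [Nat.cast_sub (by omega : 1 ≤ m)]
      ring
    rw [e1, e2, ← Real.rpow_add hδ]
    have : ((m:ℝ) - 1) + (-(1 - 1/(m:ℝ))) * m = 0 := by field_simp; ring
    rw [this, Real.rpow_zero]
  have h2 : r^m * v^m > r - δ := by
    by_cases hrδ : δ ≤ r
    · have hvm : (2*a)^m ≤ v^m := by
        apply pow_le_pow_left₀ (by positivity)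
        linarith [hv]
      have hδm : δ^(m-1) ≤ r^(m-1) := pow_le_pow_left₀ hδ.le hrδ _
      have hmul : δ^(m-1) * (2*a)^m ≤ r^(m-1) * v^m :=
        mul_le_mul hδm hvm (by positivity) (by positivity)
      have hpm : δ^(m-1) * (2*a)^m = 2^m := by
        rw [mul_pow]
        calc δ^(m-1) * (2^m * a^m) = 2^m * (δ^(m-1) * a^m) := by ring
        _ = 2^m := by rw [key, mul_one]
      have hrm : r^m = r^(m-1) * r := by
        rw [← pow_succ]; congr 1; omega
      have h2pow : (1:ℝ) ≤ 2^m := one_le_pow₀ (by norm_num)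
      have : 2^m * r ≤ r^m * v^m := by
        rw [hrm]
        calc (2:ℝ)^m * r = (δ^(m-1) * (2*a)^m) * r := by rw [hpm]
        _ ≤ (r^(m-1) * v^m) * r := by
            apply mul_le_mul_of_nonneg_right hmul hr0
        _ = r^(m-1) * r * v^m := by ring
      nlinarith [this, h2pow, hr0, hδ]
    · push_neg at hrδ
      have : 0 ≤ r^m * v^m := by positivity
      linarith
  nlinarith [h1sq, h2, sq_nonneg (δ - r), hδ]
end

section
/- Fix an integer m ≥ 2, let c = 1/3, and let 0 < δ be sufficiently small. Define f(z) = δ^{2/m}|(z − 1/2 − δ)/(z − 1/2 + δ)|². Then for all z ∈ ℂ with 1/4 − c²δ < |z|² < 1 one has f(z) ≤ 5 δ^{2/m}. -/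
theorem weight_uniform_bound (m : ℕ) (hm : 2 ≤ m) :
    ∃ δ₀ : ℝ, 0 < δ₀ ∧ ∀ δ : ℝ, 0 < δ → δ < δ₀ →
      ∀ z : ℂ, 1 / 4 - (1 / 3 : ℝ) ^ 2 * δ < ‖z‖ ^ 2 → ‖z‖ ^ 2 < 1 →
        δ ^ ((2 : ℝ) / m) *
            ‖(z - 1 / 2 - (δ : ℂ)) / (z - 1 / 2 + (δ : ℂ))‖ ^ 2 ≤
          5 * δ ^ ((2 : ℝ) / m) := by
  refine ⟨1/3, by norm_num, fun δ hδ hδ' z h1 h2 => ?_⟩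
  have hrp : (0:ℝ) ≤ δ ^ ((2:ℝ)/m) := Real.rpow_nonneg hδ.le _
  set x := z.re with hx
  set y := z.im with hy
  have hz1 : ‖z‖ ^ 2 = x^2 + y^2 := by
    rw [Complex.sq_norm, Complex.normSq_apply]; ring
  have hden : ‖z - 1/2 + (δ:ℂ)‖ ^ 2 = (x - 1/2 + δ)^2 + y^2 := by
    rw [Complex.sq_norm, Complex.normSq_apply]
    simp [Complex.add_re, Complex.sub_re, Complex.add_im, Complex.sub_im,
      Complex.ofReal_re, Complex.ofReal_im]
    ring
  have hnum : ‖z - 1/2 - (δ:ℂ)‖ ^ 2 = (x - 1/2 - δ)^2 + y^2 := by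
    rw [Complex.sq_norm, Complex.normSq_apply]
    simp [Complex.add_re, Complex.sub_re, Complex.add_im, Complex.sub_im,
      Complex.ofReal_re, Complex.ofReal_im]
    ring
  rw [hz1] at h1
  have hdpos : 0 < (x - 1/2 + δ)^2 + y^2 := by nlinarith [sq_nonneg (x - 1/2), sq_nonneg y]
  have habsd : 0 < ‖z - 1/2 + (δ:ℂ)‖ ^ 2 := by rw [hden]; exact hdpos
  have key : ‖(z - 1/2 - (δ:ℂ)) / (z - 1/2 + (δ:ℂ))‖ ^ 2 ≤ 5 := by
    rw [norm_div, div_pow, div_le_iff₀ habsd, hden, hnum]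
    nlinarith [sq_nonneg (x - 1/2), sq_nonneg y]
  calc δ ^ ((2:ℝ)/m) * ‖(z - 1/2 - (δ:ℂ)) / (z - 1/2 + (δ:ℂ))‖ ^ 2
      ≤ δ ^ ((2:ℝ)/m) * 5 := mul_le_mul_of_nonneg_left key hrp
    _ = 5 * δ ^ ((2:ℝ)/m) := by ring
end
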